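/- Isotropic subspace perturbation bound: let B be a real m×n matrix of rank r with singular values s₁ ≥ ... ≥ s_r > 0, and let Δ = s_r. Let A = B + W with ε := ‖W‖ < Δ. If x ∈ ℝ^n is a unit vector with Ax = z·y for a unit vector y ∈ ℝ^m and z ≥ Δ − ε > 0, and F ⊂ ℝ^m is the span of the left singular vectors of B corresponding to s₁,...,s_r, then dist(y, F) ≤ ε/(Δ − ε). -/

import Mathlib

noncomputable def enorm' {m : ℕ} (v : Fin m → ℝ) : ℝ := Real.sqrt (∑ i, v i ^ 2)

noncomputable def specNorm {m n : ℕ} (A : Matrix (Fin m) (Fin n) ℝ) : ℝ :=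
  ‖(LinearMap.toContinuousLinearMap (Matrix.toEuclideanLin A))‖

theorem Matrix.isHermitian_transpose_mul_self {m n : ℕ} (A : Matrix (Fin m) (Fin n) ℝ) :
    (Matrix.transpose A * A).IsHermitian := by
  have h := Matrix.isHermitian_conjTranspose_mul_self A
  rwa [Matrix.conjTranspose_eq_transpose_of_trivial] at h

noncomputable def sval {m n : ℕ} (A : Matrix (Fin m) (Fin n) ℝ) (i : Fin n) : ℝ :=
  Real.sqrt ((Matrix.isHermitian_transpose_mul_self A).eigenvalues
    (Tuple.sort (Matrix.isHermitian_transpose_mul_self A).eigenvalues i.rev))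

/-- Euclidean distance from a vector to a subspace of `ℝ^m`. -/
noncomputable def distSub {m : ℕ} (y : Fin m → ℝ) (F : Submodule ℝ (Fin m → ℝ)) : ℝ :=
  ⨅ f : F, enorm' (y - (f : Fin m → ℝ))

lemma enorm'_eq_norm {m : ℕ} (v : Fin m → ℝ) :
    enorm' v = ‖(WithLp.equiv 2 (Fin m → ℝ)).symm v‖ := by
  rw [EuclideanSpace.norm_eq, enorm']
  congr 1
  apply Finset.sum_congr rfl
  intro i _
  rw [Real.norm_eq_abs, sq_abs]
  rfl

lemma enorm'_nonneg {m : ℕ} (v : Fin m → ℝ) : 0 ≤ enorm' v := Real.sqrt_nonneg _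

/-- Isotropic subspace perturbation bound: a left singular vector `y` of `A = B + W`
belonging to a singular value `z ≥ Δ − ε` is within `ε/(Δ − ε)` of the range of `B`
(the span of the left singular vectors of `B` corresponding to its nonzero singular
values), where `Δ` is the smallest nonzero singular value of `B` and `ε = ‖W‖ < Δ`. -/
theorem stmt9 {m n : ℕ} (B W : Matrix (Fin m) (Fin n) ℝ)
    (Δ ε z : ℝ) (hΔpos : 0 < Δ)
    (hΔle : ∀ k : Fin n, sval B k ≠ 0 → Δ ≤ sval B k)
    (hΔmem : ∃ k : Fin n, sval B k = Δ)
    (hε : ε = specNorm W) (hεΔ : ε < Δ)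
    (x : Fin n → ℝ) (y : Fin m → ℝ) (hx : enorm' x = 1) (hy : enorm' y = 1)
    (hAx : (B + W).mulVec x = z • y) (hz : Δ - ε ≤ z) :
    distSub y (LinearMap.range (Matrix.mulVecLin B)) ≤ ε / (Δ - ε) := by
  have hΔε : 0 < Δ - ε := sub_pos.mpr hεΔ
  have hzpos : 0 < z := lt_of_lt_of_le hΔε hz
  have hεnn : 0 ≤ ε := by
    rw [hε]; exact norm_nonneg _
  -- the candidate element of the range
  set f : Fin m → ℝ := z⁻¹ • B.mulVec x with hf
  have hfmem : f ∈ LinearMap.range (Matrix.mulVecLin B) :=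
    ⟨z⁻¹ • x, by simp [hf, Matrix.mulVec_smul]⟩
  have key : y - f = z⁻¹ • W.mulVec x := by
    have : B.mulVec x + W.mulVec x = z • y := by
      rw [← Matrix.add_mulVec]; exact hAx
    have hy' : y = z⁻¹ • (B.mulVec x + W.mulVec x) := by
      rw [this, smul_smul, inv_mul_cancel₀ hzpos.ne', one_smul]
    rw [hy', hf, smul_add]
    abel
  -- bound on ‖Wx‖
  have hWx : enorm' (W.mulVec x) ≤ ε := by
    rw [enorm'_eq_norm, hε, specNorm]
    have := (LinearMap.toContinuousLinearMap (Matrix.toEuclideanLin W)).le_opNorm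
      ((WithLp.equiv 2 (Fin n → ℝ)).symm x)
    have hx' : ‖(WithLp.equiv 2 (Fin n → ℝ)).symm x‖ = 1 := by
      rw [← enorm'_eq_norm, hx]
    rw [hx', mul_one] at this
    refine le_trans (le_of_eq ?_) this
    congr 1
  have hbound : enorm' (y - f) ≤ ε / (Δ - ε) := by
    rw [key, enorm'_eq_norm]
    have : (WithLp.equiv 2 (Fin m → ℝ)).symm (z⁻¹ • W.mulVec x)
        = z⁻¹ • (WithLp.equiv 2 (Fin m → ℝ)).symm (W.mulVec x) := rfl
    rw [this, norm_smul, Real.norm_eq_abs, abs_of_pos (inv_pos.mpr hzpos),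
      ← enorm'_eq_norm]
    calc z⁻¹ * enorm' (W.mulVec x) ≤ z⁻¹ * ε := by
          exact mul_le_mul_of_nonneg_left hWx (le_of_lt (inv_pos.mpr hzpos))
      _ ≤ (Δ - ε)⁻¹ * ε := by
          exact mul_le_mul_of_nonneg_right (inv_anti₀ hΔε hz) hεnn
      _ = ε / (Δ - ε) := by ring
  have : distSub y (LinearMap.range (Matrix.mulVecLin B)) ≤ enorm' (y - f) := by
    apply ciInf_le ⟨0, ?_⟩ (⟨f, hfmem⟩ : LinearMap.range (Matrix.mulVecLin B))
    rintro r ⟨g, rfl⟩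
    exact enorm'_nonneg _
  exact le_trans this hbound
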